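/- Let p ≥ 5 be prime, f_1(x) = x^2 - 4x and f_9(x) = x^2 - 20x + 64. Then ∑_{x=0}^{p-1} (f_1(x) f_9(x) / p) = -1 - (p/3), where (·/p) is the Legendre symbol mod p and (p/3) the Legendre symbol of p mod 3. -/

import Mathlib

open Finset

-- helper: sum of quadratic character over y*(y-16) is -1
lemma sum_quadChar_aux (p : ℕ) [Fact p.Prime] (hp2 : p ≠ 2) (h16 : (16 : ZMod p) ≠ 0) :
    ∑ y : ZMod p, quadraticChar (ZMod p) (y * (y - 16)) = -1 := by
  set χ := quadraticChar (ZMod p) with hχ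
  have hchar : ringChar (ZMod p) ≠ 2 := by rw [ZMod.ringChar_zmod_n]; exact hp2
  have h1 : ∑ y ∈ (Finset.univ : Finset (ZMod p)).erase 0, χ (y * (y - 16))
      + χ (0 * (0 - 16)) = ∑ y : ZMod p, χ (y * (y - 16)) :=
    Finset.sum_erase_add _ _ (mem_univ 0)
  rw [zero_mul, MulChar.map_zero, add_zero] at h1
  rw [← h1]
  have h2 : ∑ y ∈ (Finset.univ : Finset (ZMod p)).erase 0, χ (y * (y - 16))
      = ∑ w ∈ (Finset.univ : Finset (ZMod p)).erase 1, χ w := by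
    refine Finset.sum_nbij' (fun y => 1 - 16 / y) (fun w => 16 / (1 - w)) ?_ ?_ ?_ ?_ ?_
    · intro y hy
      simp only [mem_erase, mem_univ, and_true] at hy ⊢
      intro h
      have : (16 : ZMod p) / y = 0 := by linear_combination -h
      exact h16 (by field_simp at this; simpa using this)
    · intro w hw
      simp only [mem_erase, mem_univ, and_true] at hw ⊢
      have : (1 : ZMod p) - w ≠ 0 := sub_ne_zero.mpr (Ne.symm hw)
      exact div_ne_zero h16 this
    · intro y hy
      simp only [mem_erase, mem_univ, and_true] at hy
      field_simp
      rw [sub_sub_cancel, div_self h16]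
    · intro w hw
      simp only [mem_erase, mem_univ, and_true] at hw
      have : (1 : ZMod p) - w ≠ 0 := sub_ne_zero.mpr (Ne.symm hw)
      field_simp
      ring
    · intro y hy
      simp only [mem_erase, mem_univ, and_true] at hy
      have key : y * (y - 16) = y ^ 2 * (1 - 16 / y) := by field_simp
      rw [key, map_mul, quadraticChar_sq_one' hy, one_mul]
  rw [h2]
  have h3 : ∑ w ∈ (Finset.univ : Finset (ZMod p)).erase 1, χ w + χ 1
      = ∑ w : ZMod p, χ w := Finset.sum_erase_add _ _ (mem_univ 1)
  rw [quadraticChar_sum_zero hchar] at h3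
  have : χ 1 = 1 := map_one χ
  omega

theorem epsilon_nine (p : ℕ) [Fact p.Prime] (hp : 5 ≤ p) :
    ∑ x ∈ Finset.range p,
      legendreSym p (((x : ℤ) ^ 2 - 4 * x) * ((x : ℤ) ^ 2 - 20 * x + 64)) =
      -1 - legendreSym 3 p := by
  haveI : NeZero p := ⟨by omega⟩
  haveI : Fact (Nat.Prime 3) := ⟨by norm_num⟩
  have hp' : p.Prime := Fact.out
  have hp2 : p ≠ 2 := by omega
  have hnd : ∀ n : ℕ, 0 < n → n < p → ((n : ℕ) : ZMod p) ≠ 0 := by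
    intro n hn hnp h
    rw [ZMod.natCast_eq_zero_iff] at h
    exact absurd (Nat.le_of_dvd hn h) (by omega)
  have h16 : (16 : ZMod p) ≠ 0 := by
    intro h
    have h' : ((16 : ℕ) : ZMod p) = 0 := by exact_mod_cast h
    rw [ZMod.natCast_eq_zero_iff] at h'
    have := hp'.dvd_of_dvd_pow (show p ∣ 2 ^ 4 from by norm_num [h'] )
    have := Nat.le_of_dvd (by norm_num) this
    omega
  set χ := quadraticChar (ZMod p) with hχ
  have key : ∀ x : ℕ, legendreSym p (((x : ℤ) ^ 2 - 4 * x) * ((x : ℤ) ^ 2 - 20 * x + 64))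
      = χ (((x : ZMod p) - 4) ^ 2 * ((x : ZMod p) * ((x : ZMod p) - 16))) := by
    intro x
    rw [legendreSym]
    congr 1
    push_cast
    ring
  rw [Finset.sum_congr rfl fun x _ => key x]
  have reindex : ∑ x ∈ range p, χ (((x : ZMod p) - 4) ^ 2 * ((x : ZMod p) * ((x : ZMod p) - 16)))
      = ∑ y : ZMod p, χ ((y - 4) ^ 2 * (y * (y - 16))) := by
    refine Finset.sum_nbij' (fun x => (x : ZMod p)) (fun y => y.val) ?_ ?_ ?_ ?_ ?_
    · intro x _; exact mem_univ _
    · intro y _; exact mem_range.mpr (ZMod.val_lt y)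
    · intro x hx; exact ZMod.val_cast_of_lt (mem_range.mp hx)
    · intro y _; exact ZMod.natCast_rightInverse y
    · intro x _; rfl
  rw [reindex]
  have split : ∑ y : ZMod p, χ ((y - 4) ^ 2 * (y * (y - 16)))
      = ∑ y ∈ (Finset.univ : Finset (ZMod p)).erase 4, χ (y * (y - 16)) := by
    rw [← Finset.sum_erase_add _ _ (mem_univ (4 : ZMod p))]
    have : ((4 : ZMod p) - 4) ^ 2 * (4 * (4 - 16)) = 0 := by simp
    rw [this, MulChar.map_zero, add_zero]
    apply Finset.sum_congr rfl
    intro y hy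
    have hy4 : y - 4 ≠ 0 := sub_ne_zero.mpr (mem_erase.mp hy).1
    rw [map_mul, quadraticChar_sq_one' hy4, one_mul]
  rw [split]
  have h4 : ∑ y ∈ (Finset.univ : Finset (ZMod p)).erase 4, χ (y * (y - 16))
      + χ (4 * (4 - 16)) = ∑ y : ZMod p, χ (y * (y - 16)) :=
    Finset.sum_erase_add _ _ (mem_univ 4)
  rw [sum_quadChar_aux p hp2 h16] at h4
  have hval : χ ((4 : ZMod p) * (4 - 16)) = legendreSym 3 p := by
    have e : (4 : ZMod p) * (4 - 16) = ((-48 : ℤ) : ZMod p) := by push_cast; ring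
    have e2 : χ ((4 : ZMod p) * (4 - 16)) = legendreSym p (-48) := by
      rw [e, legendreSym]
    rw [e2]
    have h3 : ((3 : ℤ) : ZMod p) ≠ 0 := by
      have := hnd 3 (by norm_num) (by omega); exact_mod_cast this
    have h4' : ((4 : ℤ) : ZMod p) ≠ 0 := by
      have := hnd 4 (by norm_num) (by omega); exact_mod_cast this
    have : legendreSym p (-48) = legendreSym p (-3) * legendreSym p (4 ^ 2) := by
      rw [← legendreSym.mul]; norm_num
    rw [this, legendreSym.sq_one' (p := p) h4', mul_one]
    have hneg : legendreSym p (-3) = legendreSym p (-1) * legendreSym p 3 := by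
      rw [← legendreSym.mul]; norm_num
    have hrec := legendreSym.quadratic_reciprocity (p := 3) (q := p) (by norm_num) hp2 (by omega)
    have hodd : p % 2 = 1 := hp'.eq_two_or_odd.resolve_left hp2
    have hχ₄ : legendreSym p (-1) = (-1) ^ (p / 2) := by
      rw [legendreSym.at_neg_one hp2, ZMod.χ₄_eq_neg_one_pow hodd]
    have hsq : legendreSym p 3 * legendreSym p 3 = 1 := by
      have := legendreSym.sq_one p h3
      nlinarith [this]
    have h32 : (3 : ℕ) / 2 = 1 := by norm_num
    rw [h32, one_mul] at hrec
    have hrec' : legendreSym p 3 * legendreSym 3 (p : ℤ) = (-1) ^ (p / 2) := by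
      exact_mod_cast hrec
    rw [hneg, hχ₄, ← hrec']
    linear_combination legendreSym 3 (p : ℤ) * hsq
  rw [hval] at h4
  omega
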